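/- Under the factor model, for every t ≥ 0 and every r ∈ ℝ^d the score of the time-t marginal admits the rearranged representation ∇ log p_t(r) = α_t Λ_t⁻¹ β · ξ(βᵀ Λ_t⁻¹ r, t) − Λ_t⁻¹ r, where ξ(z,t) is the posterior-mean-type function defined below. -/

import Mathlib

open MeasureTheory Matrix

noncomputable section

/-- Euclidean (ℓ²) norm on `Fin n → ℝ`. -/
def eucNorm {n : ℕ} (x : Fin n → ℝ) : ℝ := Real.sqrt (∑ i, x i ^ 2)

/-- The `n`-dimensional Gaussian density `φ(x; μ, S)`. -/
def gaussD (n : ℕ) (x μ : Fin n → ℝ) (S : Matrix (Fin n) (Fin n) ℝ) : ℝ :=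
  (2 * Real.pi) ^ (-(n : ℝ) / 2) * S.det ^ (-(1 : ℝ) / 2) *
    Real.exp (-((x - μ) ⬝ᵥ (S⁻¹ *ᵥ (x - μ))) / 2)

/-- Gradient as the vector of partial derivatives. -/
def gradv {n : ℕ} (f : (Fin n → ℝ) → ℝ) (x : Fin n → ℝ) : Fin n → ℝ :=
  fun i => fderiv ℝ f x (Pi.single i 1)

/-- `α_t = e^{-t/2}`. -/
def af (t : ℝ) : ℝ := Real.exp (-t / 2)

/-- `h_t = 1 - α_t²`. -/
def hf (t : ℝ) : ℝ := 1 - af t ^ 2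

/-- `Λ_t = diag(h_t + σ_i² α_t²)`. -/
def Lam {d : ℕ} (σ : Fin d → ℝ) (t : ℝ) : Matrix (Fin d) (Fin d) ℝ :=
  Matrix.diagonal fun i => hf t + σ i ^ 2 * af t ^ 2

/-- `Λ_t^{-1/2}`. -/
def LamInvSqrt {d : ℕ} (σ : Fin d → ℝ) (t : ℝ) : Matrix (Fin d) (Fin d) ℝ :=
  Matrix.diagonal fun i => (Real.sqrt (hf t + σ i ^ 2 * af t ^ 2))⁻¹

/-- `Γ_t = (βᵀ Λ_t⁻¹ β)⁻¹`. -/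
def Gam {d k : ℕ} (β : Matrix (Fin d) (Fin k) ℝ) (σ : Fin d → ℝ) (t : ℝ) :
    Matrix (Fin k) (Fin k) ℝ :=
  (βᵀ * (Lam σ t)⁻¹ * β)⁻¹

/-- `T_t = Λ_t^{-1/2} β Γ_t βᵀ Λ_t^{-1/2}`. -/
def Tproj {d k : ℕ} (β : Matrix (Fin d) (Fin k) ℝ) (σ : Fin d → ℝ) (t : ℝ) :
    Matrix (Fin d) (Fin d) ℝ :=
  LamInvSqrt σ t * β * Gam β σ t * βᵀ * LamInvSqrt σ t

/-- Time-`t` marginal density `p_t`. -/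
def pT {d k : ℕ} (β : Matrix (Fin d) (Fin k) ℝ) (σ : Fin d → ℝ)
    (pfac : (Fin k → ℝ) → ℝ) (t : ℝ) (r : Fin d → ℝ) : ℝ :=
  ∫ f : Fin k → ℝ, gaussD d r (af t • (β *ᵥ f)) (Lam σ t) * pfac f

/-- Smoothed factor density `p_t^fac`. -/
def pTfac {d k : ℕ} (β : Matrix (Fin d) (Fin k) ℝ) (σ : Fin d → ℝ)
    (pfac : (Fin k → ℝ) → ℝ) (t : ℝ) (y : Fin k → ℝ) : ℝ :=
  ∫ f : Fin k → ℝ, gaussD k y (af t • f) (Gam β σ t) * pfac f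

/-- The posterior-mean-type function `ξ(z, t)`. -/
def xiFun {d k : ℕ} (β : Matrix (Fin d) (Fin k) ℝ) (σ : Fin d → ℝ)
    (pfac : (Fin k → ℝ) → ℝ) (t : ℝ) (z : Fin k → ℝ) : Fin k → ℝ :=
  (∫ f : Fin k → ℝ, gaussD k (Gam β σ t *ᵥ z) (af t • f) (Gam β σ t) * pfac f)⁻¹ •
    ∫ f : Fin k → ℝ, (gaussD k (Gam β σ t *ᵥ z) (af t • f) (Gam β σ t) * pfac f) • f

lemma mulVec_dot {m n : ℕ} (B : Matrix (Fin m) (Fin n) ℝ) (f : Fin n → ℝ) (u : Fin m → ℝ) :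
    (B *ᵥ f) ⬝ᵥ u = f ⬝ᵥ (Bᵀ *ᵥ u) := by
  rw [Matrix.dotProduct_mulVec, Matrix.vecMul_transpose, dotProduct_comm]

lemma abs_le_one_add_sq' (a : ℝ) : |a| ≤ 1 + a ^ 2 := by
  nlinarith [sq_abs a, abs_nonneg a]

lemma abs_le_one_add_euc {n : ℕ} (g : Fin n → ℝ) (j : Fin n) : |g j| ≤ 1 + eucNorm g ^ 2 := by
  have h1 : eucNorm g ^ 2 = ∑ i, g i ^ 2 := by
    rw [eucNorm, Real.sq_sqrt (Finset.sum_nonneg fun i _ => sq_nonneg (g i))]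
  have h2 : g j ^ 2 ≤ ∑ i, g i ^ 2 :=
    Finset.single_le_sum (f := fun i => g i ^ 2) (fun i _ => sq_nonneg _) (Finset.mem_univ j)
  have h3 := abs_le_one_add_sq' (g j)
  rw [h1]
  linarith

/-- linear functional v ↦ ∑ c i * v i as a CLM -/
def ellc {n : ℕ} (c : Fin n → ℝ) : (Fin n → ℝ) →L[ℝ] ℝ :=
  ∑ i, c i • (ContinuousLinearMap.proj i : (Fin n → ℝ) →L[ℝ] ℝ)

lemma ellc_apply {n : ℕ} (c v : Fin n → ℝ) : ellc c v = ∑ i, c i * v i := by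
  simp [ellc, ContinuousLinearMap.sum_apply]

lemma ellc_norm_le {n : ℕ} (c : Fin n → ℝ) : ‖ellc c‖ ≤ ∑ i, |c i| := by
  refine ContinuousLinearMap.opNorm_le_bound _ (Finset.sum_nonneg fun i _ => abs_nonneg _) ?_
  intro v
  rw [ellc_apply]
  calc |∑ i, c i * v i| ≤ ∑ i, |c i * v i| := Finset.abs_sum_le_sum_abs _ _
    _ ≤ ∑ i, |c i| * ‖v‖ := by
        refine Finset.sum_le_sum fun i _ => ?_
        rw [abs_mul]
        exact mul_le_mul_of_nonneg_left (norm_le_pi_norm v i) (abs_nonneg _)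
    _ = (∑ i, |c i|) * ‖v‖ := by rw [Finset.sum_mul]

lemma ellc_continuous {n : ℕ} : Continuous (ellc (n := n)) := by
  refine continuous_finset_sum _ fun i _ => ?_
  exact (continuous_apply i).smul continuous_const

lemma dot_symm {n : ℕ} {M : Matrix (Fin n) (Fin n) ℝ} (h : Mᵀ = M) (a b : Fin n → ℝ) :
    a ⬝ᵥ (M *ᵥ b) = b ⬝ᵥ (M *ᵥ a) := by
  rw [Matrix.dotProduct_mulVec, ← Matrix.mulVec_transpose, h, dotProduct_comm]

lemma quad_sub {n : ℕ} {M : Matrix (Fin n) (Fin n) ℝ} (h : Mᵀ = M) (a b : Fin n → ℝ) :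
    (a - b) ⬝ᵥ (M *ᵥ (a - b)) =
      a ⬝ᵥ (M *ᵥ a) - 2 * (b ⬝ᵥ (M *ᵥ a)) + b ⬝ᵥ (M *ᵥ b) := by
  rw [Matrix.mulVec_sub, sub_dotProduct, dotProduct_sub,
    dotProduct_sub, dot_symm h a b]
  ring

lemma quad_diag {n : ℕ} (v x : Fin n → ℝ) :
    x ⬝ᵥ (Matrix.diagonal v *ᵥ x) = ∑ i, v i * x i ^ 2 := by
  simp [dotProduct, Matrix.mulVec_diagonal]
  exact Finset.sum_congr rfl fun i _ => by ring

lemma gauss_hasFDerivAt {n : ℕ} (C : ℝ) (v μ x : Fin n → ℝ) :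
    HasFDerivAt (fun y : Fin n → ℝ => C * Real.exp (-(∑ i, v i * (y i - μ i) ^ 2) / 2))
      ((C * Real.exp (-(∑ i, v i * (x i - μ i) ^ 2) / 2)) •
        ellc (fun i => -(v i * (x i - μ i)))) x := by
  have hq : HasFDerivAt (fun y : Fin n → ℝ => ∑ i, v i * (y i - μ i) ^ 2)
      (∑ i : Fin n, (v i * (2 * (x i - μ i))) •
        (ContinuousLinearMap.proj i : (Fin n → ℝ) →L[ℝ] ℝ)) x := by
    refine HasFDerivAt.fun_sum fun i _ => ?_
    have h0 : HasFDerivAt (fun y : Fin n → ℝ => y i)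
        (ContinuousLinearMap.proj i : (Fin n → ℝ) →L[ℝ] ℝ) x :=
      (ContinuousLinearMap.proj i : (Fin n → ℝ) →L[ℝ] ℝ).hasFDerivAt
    have h1 := h0.sub_const (μ i)
    have heq : (fun y : Fin n → ℝ => v i * (y i - μ i) ^ 2)
        = fun y : Fin n → ℝ => v i * ((y i - μ i) * (y i - μ i)) := by
      funext y; ring
    rw [heq]
    have h3 := (h1.mul h1).const_mul (v i)
    refine h3.congr_fderiv ?_
    ext y
    simp
    ring
  have hq2 : HasFDerivAt (fun y : Fin n → ℝ => -(∑ i, v i * (y i - μ i) ^ 2) / 2)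
      ((-(1:ℝ)/2) • (∑ i : Fin n, (v i * (2 * (x i - μ i))) •
        (ContinuousLinearMap.proj i : (Fin n → ℝ) →L[ℝ] ℝ))) x := by
    have heq : (fun y : Fin n → ℝ => -(∑ i, v i * (y i - μ i) ^ 2) / 2)
        = fun y => (-(1:ℝ)/2) * ∑ i, v i * (y i - μ i) ^ 2 := by
      funext y; ring
    rw [heq]
    exact hq.const_mul _
  have hexp := hq2.exp
  have hfin := hexp.const_mul C
  refine hfin.congr_fderiv ?_
  ext y
  simp [ellc_apply, Finset.mul_sum, ContinuousLinearMap.sum_apply]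
  ring_nf
  rw [← Finset.sum_neg_distrib]
  refine Finset.sum_congr rfl fun i _ => ?_
  ring

set_option maxHeartbeats 2000000

/-- rearranged score representation. -/
theorem score_rearranged
    (d k : ℕ) (hk1 : 1 ≤ k) (hkd : k ≤ d)
    (β : Matrix (Fin d) (Fin k) ℝ) (hβ : βᵀ * β = 1)
    (pfac : (Fin k → ℝ) → ℝ)
    (hpfac_nonneg : ∀ f, 0 ≤ pfac f)
    (hpfac_prob : (∫ f : Fin k → ℝ, pfac f) = 1)
    (hpfac_smooth : ContDiff ℝ 2 pfac)
    (hpfac_mom : Integrable (fun f : Fin k → ℝ => eucNorm f ^ 2 * pfac f))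
    (σ : Fin d → ℝ) (σmax : ℝ)
    (hσpos : ∀ i, 0 < σ i)
    (hσdec : ∀ i j : Fin d, i ≤ j → σ j ≤ σ i)
    (hσmax : ∀ i, σ i ≤ σmax)
    (t : ℝ) (htnn : 0 ≤ t) (r : Fin d → ℝ) :
    gradv (fun r' => Real.log (pT β σ pfac t r')) r =
      af t • (((Lam σ t)⁻¹ * β) *ᵥ xiFun β σ pfac t (βᵀ *ᵥ ((Lam σ t)⁻¹ *ᵥ r)))
        - (Lam σ t)⁻¹ *ᵥ r := by
  classical
  have hαpos : 0 < af t := Real.exp_pos _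
  have hα1 : af t ≤ 1 := Real.exp_le_one_iff.mpr (by linarith)
  set w : Fin d → ℝ := fun i => hf t + σ i ^ 2 * af t ^ 2 with hw_def
  have hw : ∀ i, 0 < w i := by
    intro i
    have h1 : 0 ≤ hf t := by rw [hf]; nlinarith
    have h2 : 0 < σ i ^ 2 * af t ^ 2 := by have := hσpos i; positivity
    simp only [hw_def]
    dsimp only [hf] at h1 ⊢
    nlinarith
  have hLam : Lam σ t = Matrix.diagonal w := rfl
  have hLamInv : (Lam σ t)⁻¹ = Matrix.diagonal (fun i => (w i)⁻¹) := by
    apply Matrix.inv_eq_right_inv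
    rw [hLam, Matrix.diagonal_mul_diagonal]
    have he : (fun i => w i * (w i)⁻¹) = fun _ : Fin d => (1:ℝ) :=
      funext fun i => mul_inv_cancel₀ (hw i).ne'
    rw [he, Matrix.diagonal_one]
  set W := Matrix.diagonal (fun i => (w i)⁻¹) with hW_def
  have hWsym : Wᵀ = W := Matrix.diagonal_transpose _
  set G := βᵀ * (Lam σ t)⁻¹ * β with hG_def
  have hGW : G = βᵀ * W * β := by rw [hG_def, hLamInv]
  have hGsym : Gᵀ = G := by
    rw [hGW, Matrix.transpose_mul, Matrix.transpose_mul, Matrix.transpose_transpose, hWsym,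
      Matrix.mul_assoc]
  have hquadG : ∀ x : Fin k → ℝ, x ⬝ᵥ (G *ᵥ x) = ∑ i, (w i)⁻¹ * ((β *ᵥ x) i) ^ 2 := by
    intro x
    rw [hGW, Matrix.mul_assoc, ← Matrix.mulVec_mulVec, ← mulVec_dot, ← Matrix.mulVec_mulVec]
    exact quad_diag _ _
  have hβinj : ∀ x : Fin k → ℝ, β *ᵥ x = 0 → x = 0 := by
    intro x hx
    have : (βᵀ * β) *ᵥ x = βᵀ *ᵥ (β *ᵥ x) := (Matrix.mulVec_mulVec _ _ _).symm
    rw [hβ, Matrix.one_mulVec, hx, Matrix.mulVec_zero] at this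
    exact this
  have hGposdef : G.PosDef := by
    refine Matrix.posDef_iff_dotProduct_mulVec.mpr ⟨?_, ?_⟩
    · show Gᴴ = G
      have hct : Gᴴ = Gᵀ := by ext i j; simp [Matrix.conjTranspose_apply]
      rw [hct, hGsym]
    · intro x hx
      have hst : star x = x := by funext i; simp
      rw [hst, hquadG x]
      have hβx : β *ᵥ x ≠ 0 := fun h => hx (hβinj x h)
      obtain ⟨i0, hi0⟩ : ∃ i0, (β *ᵥ x) i0 ≠ 0 := by
        by_contra h
        push_neg at h
        exact hβx (funext h)
      refine Finset.sum_pos' (fun i _ => mul_nonneg (inv_nonneg.mpr (hw i).le) (sq_nonneg _))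
        ⟨i0, Finset.mem_univ i0, ?_⟩
      have h2 : 0 < ((β *ᵥ x) i0) ^ 2 := by
        have := abs_pos.mpr hi0
        nlinarith [sq_abs ((β *ᵥ x) i0)]
      exact mul_pos (inv_pos.mpr (hw i0)) h2
  have hdetG_pos : 0 < G.det := hGposdef.det_pos
  have hGdet : IsUnit G.det := hdetG_pos.ne'.isUnit
  have hΓ : Gam β σ t = G⁻¹ := rfl
  have hGG : G * G⁻¹ = 1 := Matrix.mul_nonsing_inv _ hGdet
  have hΓinvG : (G⁻¹)⁻¹ = G := Matrix.nonsing_inv_nonsing_inv _ hGdet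
  have hΓsym : (G⁻¹)ᵀ = G⁻¹ := by rw [Matrix.transpose_nonsing_inv, hGsym]
  have hdetΓ_pos : 0 < (G⁻¹).det := by
    rw [Matrix.det_nonsing_inv, Ring.inverse_eq_inv']
    exact inv_pos.mpr hdetG_pos
  -- constants
  set Cd : ℝ := (2 * Real.pi) ^ (-(d : ℝ) / 2) * (Lam σ t).det ^ (-(1 : ℝ) / 2) with hCd_def
  set Ck : ℝ := (2 * Real.pi) ^ (-(k : ℝ) / 2) * (G⁻¹).det ^ (-(1 : ℝ) / 2) with hCk_def
  have hdetLam_pos : 0 < (Lam σ t).det := by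
    rw [hLam, Matrix.det_diagonal]
    exact Finset.prod_pos fun i _ => hw i
  have hpi : (0:ℝ) < 2 * Real.pi := by positivity
  have hCd_pos : 0 < Cd := mul_pos (Real.rpow_pos_of_pos hpi _) (Real.rpow_pos_of_pos hdetLam_pos _)
  have hCk_pos : 0 < Ck := mul_pos (Real.rpow_pos_of_pos hpi _) (Real.rpow_pos_of_pos hdetΓ_pos _)
  -- gaussian formulas
  have hgaussd : ∀ x μv : Fin d → ℝ, gaussD d x μv (Lam σ t)
      = Cd * Real.exp (-(∑ i, (w i)⁻¹ * (x i - μv i) ^ 2) / 2) := by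
    intro x μv
    rw [gaussD, hLamInv]
    have hq : (x - μv) ⬝ᵥ (W *ᵥ (x - μv)) = ∑ i, (w i)⁻¹ * (x i - μv i) ^ 2 := by
      rw [hW_def, quad_diag]
      exact Finset.sum_congr rfl fun i _ => by simp [Pi.sub_apply]
    rw [hq]
  have hgaussk : ∀ y μv : Fin k → ℝ, gaussD k y μv (Gam β σ t)
      = Ck * Real.exp (-((y - μv) ⬝ᵥ (G *ᵥ (y - μv))) / 2) := by
    intro y μv
    rw [gaussD, hΓ, hΓinvG]
  set z := βᵀ *ᵥ ((Lam σ t)⁻¹ *ᵥ r) with hz_def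
  have hz' : z = βᵀ *ᵥ (W *ᵥ r) := by rw [hz_def, hLamInv]
  set A1 := r ⬝ᵥ (W *ᵥ r) with hA1_def
  set A2 := z ⬝ᵥ (G⁻¹ *ᵥ z) with hA2_def
  set cstar := (Ck / Cd) * Real.exp ((A1 - A2) / 2) with hcstar_def
  have hcstar_pos : 0 < cstar := by
    refine mul_pos (div_pos hCk_pos hCd_pos) (Real.exp_pos _)
  have hQd : ∀ f : Fin k → ℝ, ∑ i, (w i)⁻¹ * (r i - af t * (β *ᵥ f) i) ^ 2
      = A1 - 2 * (af t * (f ⬝ᵥ z)) + af t ^ 2 * (f ⬝ᵥ (G *ᵥ f)) := by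
    intro f
    have h0 : ∑ i, (w i)⁻¹ * (r i - af t * (β *ᵥ f) i) ^ 2
        = (r - af t • (β *ᵥ f)) ⬝ᵥ (W *ᵥ (r - af t • (β *ᵥ f))) := by
      rw [hW_def, quad_diag]
      exact Finset.sum_congr rfl fun i _ => by simp [Pi.sub_apply]
    rw [h0, quad_sub hWsym]
    have h1 : (af t • (β *ᵥ f)) ⬝ᵥ (W *ᵥ r) = af t * (f ⬝ᵥ z) := by
      rw [smul_dotProduct, mulVec_dot, ← hz']
      simp
    have h2 : (af t • (β *ᵥ f)) ⬝ᵥ (W *ᵥ (af t • (β *ᵥ f))) = af t ^ 2 * (f ⬝ᵥ (G *ᵥ f)) := by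
      rw [Matrix.mulVec_smul, smul_dotProduct, dotProduct_smul, mulVec_dot,
        Matrix.mulVec_mulVec, Matrix.mulVec_mulVec, ← hGW]
      simp only [smul_eq_mul]
      ring
    rw [h1, h2, ← hA1_def]
  have hQk : ∀ f : Fin k → ℝ, ((G⁻¹ *ᵥ z) - af t • f) ⬝ᵥ (G *ᵥ ((G⁻¹ *ᵥ z) - af t • f))
      = A2 - 2 * (af t * (f ⬝ᵥ z)) + af t ^ 2 * (f ⬝ᵥ (G *ᵥ f)) := by
    intro f
    rw [quad_sub hGsym]
    have h1 : G *ᵥ (G⁻¹ *ᵥ z) = z := by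
      rw [Matrix.mulVec_mulVec, hGG, Matrix.one_mulVec]
    rw [h1]
    have h2 : (G⁻¹ *ᵥ z) ⬝ᵥ z = A2 := by
      rw [dotProduct_comm, hA2_def]
    have h3 : (af t • f) ⬝ᵥ z = af t * (f ⬝ᵥ z) := by
      rw [smul_dotProduct]; simp
    have h4 : (af t • f) ⬝ᵥ (G *ᵥ (af t • f)) = af t ^ 2 * (f ⬝ᵥ (G *ᵥ f)) := by
      rw [Matrix.mulVec_smul, smul_dotProduct, dotProduct_smul]
      simp only [smul_eq_mul]; ring
    rw [h2, h3, h4]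
  have hkey : ∀ f : Fin k → ℝ,
      gaussD k (Gam β σ t *ᵥ z) (af t • f) (Gam β σ t)
        = cstar * gaussD d r (af t • (β *ᵥ f)) (Lam σ t) := by
    intro f
    rw [hgaussk, hgaussd]
    have hμ : ∀ i, (af t • (β *ᵥ f)) i = af t * (β *ᵥ f) i := fun i => by simp
    have hsum : (∑ i, (w i)⁻¹ * (r i - (af t • (β *ᵥ f)) i) ^ 2)
        = A1 - 2 * (af t * (f ⬝ᵥ z)) + af t ^ 2 * (f ⬝ᵥ (G *ᵥ f)) := by
      rw [← hQd f]
      exact Finset.sum_congr rfl fun i _ => by rw [hμ i]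
    have hGamz : Gam β σ t *ᵥ z = G⁻¹ *ᵥ z := by rw [hΓ]
    rw [hGamz, hQk f, hsum, hcstar_def]
    have h5 : ∀ a b : ℝ, Ck / Cd * Real.exp a * (Cd * Real.exp b) = Ck * Real.exp (a + b) := by
      intro a b
      rw [Real.exp_add]
      field_simp
    rw [h5]
    congr 1
    ring
  -- analysis part
  set Fx : (Fin d → ℝ) → (Fin k → ℝ) → ℝ := fun x f =>
    (Cd * Real.exp (-(∑ i, (w i)⁻¹ * (x i - af t * (β *ᵥ f) i) ^ 2) / 2)) * pfac f with hFx_def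
  have hFx : ∀ x f, gaussD d x (af t • (β *ᵥ f)) (Lam σ t) * pfac f = Fx x f := by
    intro x f
    rw [hgaussd, hFx_def]
    have : (∑ i, (w i)⁻¹ * (x i - (af t • (β *ᵥ f)) i) ^ 2)
        = ∑ i, (w i)⁻¹ * (x i - af t * (β *ᵥ f) i) ^ 2 :=
      Finset.sum_congr rfl fun i _ => by simp
    rw [this]
  have hpT_eq : ∀ x, pT β σ pfac t x = ∫ f, Fx x f := fun x => by
    rw [pT]
    exact integral_congr_ae (Filter.Eventually.of_forall fun f => hFx x f)
  have hpfac_cont : Continuous pfac := hpfac_smooth.continuous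
  have hpfac_int : Integrable pfac := by
    by_contra h
    rw [integral_undef h] at hpfac_prob
    exact one_ne_zero hpfac_prob.symm
  have hmv_cont : ∀ i, Continuous fun f : Fin k → ℝ => (β *ᵥ f) i := by
    intro i
    simp only [Matrix.mulVec, dotProduct]
    exact continuous_finset_sum _ fun j _ => continuous_const.mul (continuous_apply j)
  have hFx_cont : ∀ x, Continuous (Fx x) := by
    intro x
    refine Continuous.mul (continuous_const.mul (Real.continuous_exp.comp ?_)) hpfac_cont
    refine Continuous.div_const (Continuous.neg ?_) 2
    refine continuous_finset_sum _ fun i _ => ?_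
    exact continuous_const.mul (((continuous_const.sub
      (continuous_const.mul (hmv_cont i))).pow 2))
  have hFx_nonneg : ∀ x f, 0 ≤ Fx x f := fun x f =>
    mul_nonneg (by positivity) (hpfac_nonneg f)
  have hFx_le : ∀ x f, Fx x f ≤ Cd * pfac f := by
    intro x f
    rw [hFx_def]
    refine mul_le_mul_of_nonneg_right ?_ (hpfac_nonneg f)
    have hle : Real.exp (-(∑ i, (w i)⁻¹ * (x i - af t * (β *ᵥ f) i) ^ 2) / 2) ≤ 1 := by
      rw [Real.exp_le_one_iff]
      have hs : 0 ≤ ∑ i, (w i)⁻¹ * (x i - af t * (β *ᵥ f) i) ^ 2 :=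
        Finset.sum_nonneg fun i _ => mul_nonneg (inv_nonneg.mpr (hw i).le) (sq_nonneg _)
      linarith
    nlinarith [hCd_pos]
  have hFx_int : ∀ x, Integrable (Fx x) := by
    intro x
    refine Integrable.bdd_mul (c := Cd) hpfac_int ?_ (Filter.Eventually.of_forall fun f => ?_)
    · exact (continuous_const.mul (Real.continuous_exp.comp (by
        refine Continuous.div_const (Continuous.neg ?_) 2
        refine continuous_finset_sum _ fun i _ => ?_
        exact continuous_const.mul (((continuous_const.sub
          (continuous_const.mul (hmv_cont i))).pow 2))))).aestronglyMeasurable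
    · rw [Real.norm_eq_abs, abs_of_nonneg (by positivity)]
      have hle : Real.exp (-(∑ i, (w i)⁻¹ * (x i - af t * (β *ᵥ f) i) ^ 2) / 2) ≤ 1 := by
        rw [Real.exp_le_one_iff]
        have hs : 0 ≤ ∑ i, (w i)⁻¹ * (x i - af t * (β *ᵥ f) i) ^ 2 :=
          Finset.sum_nonneg fun i _ => mul_nonneg (inv_nonneg.mpr (hw i).le) (sq_nonneg _)
        linarith
      nlinarith [hCd_pos]
  -- moment bounds
  have habs1 : ∀ (g : Fin k → ℝ) (j : Fin k), |g j| ≤ 1 + eucNorm g ^ 2 :=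
    fun g j => abs_le_one_add_euc g j
  have hmom_int : Integrable (fun f : Fin k → ℝ => pfac f + eucNorm f ^ 2 * pfac f) :=
    hpfac_int.add hpfac_mom
  have hIntj : ∀ j, Integrable (fun f : Fin k → ℝ => |f j| * pfac f) := by
    intro j
    refine hmom_int.mono' ?_ ?_
    · exact ((continuous_apply j).abs.mul hpfac_cont).aestronglyMeasurable
    · refine Filter.Eventually.of_forall fun f => ?_
      have h1 := habs1 f j
      have h0 := hpfac_nonneg f
      have h3 : 0 ≤ eucNorm f ^ 2 := sq_nonneg _
      rw [Real.norm_eq_abs, abs_of_nonneg (mul_nonneg (abs_nonneg _) h0)]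
      nlinarith
  -- total derivative
  set F' : (Fin d → ℝ) → (Fin k → ℝ) → (Fin d → ℝ) →L[ℝ] ℝ := fun x f =>
    (Fx x f) • ellc (fun i => -((w i)⁻¹ * (x i - af t * (β *ᵥ f) i))) with hF'_def
  have hF'deriv : ∀ (f : Fin k → ℝ) (x : Fin d → ℝ), HasFDerivAt (Fx · f) (F' x f) x := by
    intro f x
    have h := (gauss_hasFDerivAt Cd (fun i => (w i)⁻¹) (fun i => af t * (β *ᵥ f) i) x).mul_const
      (pfac f)
    refine h.congr_fderiv ?_
    rw [hF'_def, hFx_def, smul_smul, mul_comm (pfac f)]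
  have hbnd_aux : ∀ (f : Fin k → ℝ) (x : Fin d → ℝ), x ∈ Metric.ball r 1 →
      ‖F' x f‖ ≤ Cd * pfac f *
        ((∑ i, (w i)⁻¹) * (‖r‖ + 1) + ∑ j, (∑ i, (w i)⁻¹ * |β i j|) * |f j|) := by
    intro f x hx
    have hxb : ∀ i, |x i| ≤ ‖r‖ + 1 := by
      intro i
      have h1 : ‖x - r‖ < 1 := by
        rw [← dist_eq_norm]; exact Metric.mem_ball.mp hx
      have h2 : |x i| ≤ ‖x‖ := norm_le_pi_norm x i
      have h3 : ‖x‖ ≤ ‖x - r‖ + ‖r‖ := by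
        have h4 := norm_add_le (x - r) r
        simpa using h4
      linarith
    have hβf : ∀ i, |(β *ᵥ f) i| ≤ ∑ j, |β i j| * |f j| := by
      intro i
      have : (β *ᵥ f) i = ∑ j, β i j * f j := by simp [Matrix.mulVec, dotProduct]
      rw [this]
      calc |∑ j, β i j * f j| ≤ ∑ j, |β i j * f j| := Finset.abs_sum_le_sum_abs _ _
        _ = ∑ j, |β i j| * |f j| := Finset.sum_congr rfl fun j _ => abs_mul _ _
    have hci : ∀ i, |-((w i)⁻¹ * (x i - af t * (β *ᵥ f) i))|
        ≤ (w i)⁻¹ * ((‖r‖ + 1) + ∑ j, |β i j| * |f j|) := by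
      intro i
      rw [abs_neg, abs_mul, abs_of_nonneg (inv_nonneg.mpr (hw i).le)]
      refine mul_le_mul_of_nonneg_left ?_ (inv_nonneg.mpr (hw i).le)
      calc |x i - af t * (β *ᵥ f) i| ≤ |x i| + |af t * (β *ᵥ f) i| := abs_sub _ _
        _ ≤ (‖r‖ + 1) + ∑ j, |β i j| * |f j| := by
            refine add_le_add (hxb i) ?_
            rw [abs_mul, abs_of_pos hαpos]
            calc af t * |(β *ᵥ f) i| ≤ 1 * |(β *ᵥ f) i| :=
                  mul_le_mul_of_nonneg_right hα1 (abs_nonneg _)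
              _ = |(β *ᵥ f) i| := one_mul _
              _ ≤ ∑ j, |β i j| * |f j| := hβf i
    have hsum_le : (∑ i, |-((w i)⁻¹ * (x i - af t * (β *ᵥ f) i))|)
        ≤ (∑ i, (w i)⁻¹) * (‖r‖ + 1) + ∑ j, (∑ i, (w i)⁻¹ * |β i j|) * |f j| := by
      calc (∑ i, |-((w i)⁻¹ * (x i - af t * (β *ᵥ f) i))|)
          ≤ ∑ i, (w i)⁻¹ * ((‖r‖ + 1) + ∑ j, |β i j| * |f j|) :=
            Finset.sum_le_sum fun i _ => hci i
        _ = (∑ i, (w i)⁻¹) * (‖r‖ + 1) + ∑ j, (∑ i, (w i)⁻¹ * |β i j|) * |f j| := by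
            simp only [mul_add, Finset.mul_sum, Finset.sum_add_distrib, Finset.sum_mul,
              mul_assoc]
            congr 1
            rw [Finset.sum_comm]
    have hnorm : ‖F' x f‖ ≤ (Fx x f) * (∑ i, |-((w i)⁻¹ * (x i - af t * (β *ᵥ f) i))|) := by
      simp only [hF'_def]
      calc ‖(Fx x f) • ellc (fun i => -((w i)⁻¹ * (x i - af t * (β *ᵥ f) i)))‖
          = |Fx x f| * ‖ellc (fun i => -((w i)⁻¹ * (x i - af t * (β *ᵥ f) i)))‖ := by
            exact (norm_smul (Fx x f) (ellc _)).trans (by rw [Real.norm_eq_abs])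
        _ ≤ (Fx x f) * (∑ i, |-((w i)⁻¹ * (x i - af t * (β *ᵥ f) i))|) := by
            rw [abs_of_nonneg (hFx_nonneg x f)]
            exact mul_le_mul_of_nonneg_left (ellc_norm_le _) (hFx_nonneg x f)
    calc ‖F' x f‖ ≤ (Fx x f) * (∑ i, |-((w i)⁻¹ * (x i - af t * (β *ᵥ f) i))|) := hnorm
      _ ≤ (Cd * pfac f) * ((∑ i, (w i)⁻¹) * (‖r‖ + 1) + ∑ j, (∑ i, (w i)⁻¹ * |β i j|) * |f j|) := by
          refine mul_le_mul (hFx_le x f) hsum_le (Finset.sum_nonneg fun i _ => abs_nonneg _) ?_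
          exact mul_nonneg hCd_pos.le (hpfac_nonneg f)
  set bnd : (Fin k → ℝ) → ℝ := fun f => Cd * pfac f *
      ((∑ i, (w i)⁻¹) * (‖r‖ + 1) + ∑ j, (∑ i, (w i)⁻¹ * |β i j|) * |f j|) with hbnd_def
  have hbnd : ∀ (f : Fin k → ℝ), ∀ x ∈ Metric.ball r 1, ‖F' x f‖ ≤ bnd f := by
    intro f x hx
    simpa [hbnd_def, mul_assoc] using hbnd_aux f x hx
  have hbnd_int : Integrable bnd := by
    have heq : bnd = fun f => (Cd * ((∑ i, (w i)⁻¹) * (‖r‖ + 1))) * pfac f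
        + ∑ j, (Cd * (∑ i, (w i)⁻¹ * |β i j|)) * (|f j| * pfac f) := by
      funext f
      simp only [hbnd_def]
      rw [mul_add]
      congr 1
      · ring
      · rw [Finset.mul_sum]
        exact Finset.sum_congr rfl fun j _ => by ring
    rw [heq]
    exact (hpfac_int.const_mul _).add
      (integrable_finset_sum _ fun j _ => (hIntj j).const_mul _)
  have hF'cont : Continuous (F' r) := by
    simp only [hF'_def]
    refine Continuous.smul (hFx_cont r) (ellc_continuous.comp ?_)
    refine continuous_pi fun i => ?_
    exact ((continuous_const.mul (continuous_const.sub
      (continuous_const.mul (hmv_cont i)))).neg)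
  have hF'meas : AEStronglyMeasurable (F' r) volume := hF'cont.aestronglyMeasurable
  have hF_meas : ∀ᶠ x in nhds r, AEStronglyMeasurable (Fx x) volume :=
    Filter.Eventually.of_forall fun x => (hFx_cont x).aestronglyMeasurable
  have hDeriv : HasFDerivAt (fun x => ∫ f, Fx x f) (∫ f, F' r f) r := by
    exact hasFDerivAt_integral_of_dominated_of_fderiv_le (F' := F') (Metric.ball_mem_nhds r zero_lt_one) hF_meas
      (hFx_int r) hF'meas (Filter.Eventually.of_forall fun f x hx => hbnd f x hx) hbnd_int
      (Filter.Eventually.of_forall fun f x _ => hF'deriv f x)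
  have hF'int : Integrable (F' r) := by
    refine hbnd_int.mono' hF'meas (Filter.Eventually.of_forall fun f => ?_)
    exact hbnd f r (Metric.mem_ball_self zero_lt_one)
  set P := pT β σ pfac t r with hP_def
  have hP : P = ∫ f, Fx r f := hpT_eq r
  have hP_pos : 0 < P := by
    rw [hP]
    have h0 : 0 ≤ ∫ f, Fx r f := integral_nonneg fun f => hFx_nonneg r f
    rcases h0.lt_or_eq with h | h
    · exact h
    · exfalso
      have hz0 := (integral_eq_zero_iff_of_nonneg (fun f => hFx_nonneg r f) (hFx_int r)).mp h.symm
      have hpfac0 : pfac =ᵐ[volume] 0 := by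
        refine hz0.mono fun f hf => ?_
        have hFf : Fx r f = 0 := hf
        simp only [hFx_def] at hFf
        have hpos : 0 < Cd * Real.exp (-(∑ i, (w i)⁻¹ * (r i - af t * (β *ᵥ f) i) ^ 2) / 2) :=
          mul_pos hCd_pos (Real.exp_pos _)
        have := mul_eq_zero.mp hFf
        rcases this with h' | h'
        · exact absurd h' hpos.ne'
        · exact h'
      have h9 : (∫ f : Fin k → ℝ, pfac f) = 0 := by
        rw [integral_congr_ae hpfac0]
        simp
      rw [hpfac_prob] at h9
      exact one_ne_zero h9
  have hlogD : HasFDerivAt (fun x => Real.log (pT β σ pfac t x)) (P⁻¹ • (∫ f, F' r f)) r := by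
    have h1 : (fun x => Real.log (pT β σ pfac t x)) = fun x => Real.log (∫ f, Fx x f) :=
      funext fun x => by rw [hpT_eq x]
    rw [h1]
    have h2 : HasDerivAt Real.log P⁻¹ (∫ f, Fx r f) := by
      rw [← hP]; exact Real.hasDerivAt_log hP_pos.ne'
    exact h2.comp_hasFDerivAt r hDeriv
  -- integrability of moments against Fx
  have hNj_int : ∀ j, Integrable (fun f => Fx r f * f j) := by
    intro j
    refine (hmom_int.const_mul Cd).mono'
      ((hFx_cont r).mul (continuous_apply j)).aestronglyMeasurable
      (Filter.Eventually.of_forall fun f => ?_)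
    rw [Real.norm_eq_abs, abs_mul, abs_of_nonneg (hFx_nonneg r f)]
    have h1 := hFx_le r f
    have h2 := habs1 f j
    have h3 := hpfac_nonneg f
    have h4 : 0 ≤ eucNorm f ^ 2 := sq_nonneg _
    have h5 : Fx r f * |f j| ≤ (Cd * pfac f) * (1 + eucNorm f ^ 2) :=
      mul_le_mul h1 h2 (abs_nonneg _) (by positivity)
    calc Fx r f * |f j| ≤ (Cd * pfac f) * (1 + eucNorm f ^ 2) := h5
      _ = Cd * (pfac f + eucNorm f ^ 2 * pfac f) := by ring
  set Nj : Fin k → ℝ := fun j => ∫ f, Fx r f * f j with hNj_def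
  have hM_int : Integrable (fun f => (Fx r f) • f) := by
    refine (hmom_int.const_mul Cd).mono'
      ((hFx_cont r).smul continuous_id).aestronglyMeasurable
      (Filter.Eventually.of_forall fun f => ?_)
    rw [norm_smul, Real.norm_eq_abs, abs_of_nonneg (hFx_nonneg r f)]
    have h1 := hFx_le r f
    have hnf : ‖f‖ ≤ 1 + eucNorm f ^ 2 := by
      have h4 : (0:ℝ) ≤ 1 + eucNorm f ^ 2 := by positivity
      refine (pi_norm_le_iff_of_nonneg h4).mpr fun j => ?_
      rw [Real.norm_eq_abs]
      exact habs1 f j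
    have h3 := hpfac_nonneg f
    have h5 : Fx r f * ‖f‖ ≤ (Cd * pfac f) * (1 + eucNorm f ^ 2) :=
      mul_le_mul h1 hnf (norm_nonneg _) (by positivity)
    calc Fx r f * ‖f‖ ≤ (Cd * pfac f) * (1 + eucNorm f ^ 2) := h5
      _ = Cd * (pfac f + eucNorm f ^ 2 * pfac f) := by ring
  have hMj : ∀ j, (∫ f, (Fx r f) • f) j = Nj j := by
    intro j
    have h1 := (ContinuousLinearMap.proj j (R := ℝ)
      (φ := fun _ : Fin k => ℝ)).integral_comp_comm hM_int
    have h2 : (fun f : Fin k → ℝ => (ContinuousLinearMap.proj j (R := ℝ)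
        (φ := fun _ : Fin k => ℝ)) ((Fx r f) • f)) = fun f => Fx r f * f j := by
      funext f
      simp [smul_eq_mul]
    rw [h2] at h1
    have h3 : Nj j = ∫ f, Fx r f * f j := rfl
    rw [h3, h1]
    rfl
  have hxi : xiFun β σ pfac t z = P⁻¹ • (∫ f, (Fx r f) • f) := by
    rw [xiFun]
    have hD : (∫ f, gaussD k (Gam β σ t *ᵥ z) (af t • f) (Gam β σ t) * pfac f) = cstar * P := by
      have he : (fun f : Fin k → ℝ => gaussD k (Gam β σ t *ᵥ z) (af t • f) (Gam β σ t) * pfac f)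
          = fun f => cstar * Fx r f := by
        funext f
        rw [hkey f, mul_assoc, hFx]
      rw [he, integral_const_mul, ← hP]
    have hN : (∫ f, (gaussD k (Gam β σ t *ᵥ z) (af t • f) (Gam β σ t) * pfac f) • f)
        = cstar • ∫ f, (Fx r f) • f := by
      have he : (fun f : Fin k → ℝ =>
          (gaussD k (Gam β σ t *ᵥ z) (af t • f) (Gam β σ t) * pfac f) • f)
          = fun f => cstar • ((Fx r f) • f) := by
        funext f
        rw [hkey f, mul_assoc, hFx, mul_smul]
      rw [he, integral_smul]
    rw [hD, hN, smul_smul]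
    congr 1
    rw [mul_inv]
    field_simp
  -- final assembly
  funext i
  have hgrad : gradv (fun r' => Real.log (pT β σ pfac t r')) r i
      = P⁻¹ * (∫ f, F' r f) (Pi.single i 1) := by
    rw [gradv, hlogD.fderiv]
    simp
  have happly : (∫ f, F' r f) (Pi.single i 1)
      = ∫ f, Fx r f * (-((w i)⁻¹ * (r i - af t * (β *ᵥ f) i))) := by
    rw [ContinuousLinearMap.integral_apply hF'int (Pi.single i 1)]
    refine integral_congr_ae (Filter.Eventually.of_forall fun f => ?_)
    simp only [hF'_def, ContinuousLinearMap.smul_apply, smul_eq_mul]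
    congr 1
    rw [ellc_apply]
    rw [Finset.sum_eq_single i]
    · simp
    · intro j _ hj
      simp [Pi.single_apply, hj]
    · intro h; exact absurd (Finset.mem_univ i) h
  have hIi : (∫ f, Fx r f * (-((w i)⁻¹ * (r i - af t * (β *ᵥ f) i))))
      = -((w i)⁻¹ * r i) * P + (w i)⁻¹ * af t * ∑ j, β i j * Nj j := by
    have heq : (fun f => Fx r f * (-((w i)⁻¹ * (r i - af t * (β *ᵥ f) i))))
        = fun f => (-((w i)⁻¹ * r i)) * Fx r f
          + ∑ j, ((w i)⁻¹ * af t * β i j) * (Fx r f * f j) := by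
      funext f
      have hbv : (β *ᵥ f) i = ∑ j, β i j * f j := by simp [Matrix.mulVec, dotProduct]
      rw [hbv]
      have h1 : Fx r f * (∑ j, β i j * f j) = ∑ j, β i j * (Fx r f * f j) := by
        rw [Finset.mul_sum]
        exact Finset.sum_congr rfl fun j _ => by ring
      have h2 : ∑ j, ((w i)⁻¹ * af t * β i j) * (Fx r f * f j)
          = ((w i)⁻¹ * af t) * ∑ j, β i j * (Fx r f * f j) := by
        rw [Finset.mul_sum]
        exact Finset.sum_congr rfl fun j _ => by ring
      rw [h2, ← h1]
      ring
    rw [heq, integral_add ((hFx_int r).const_mul _)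
      (integrable_finset_sum _ fun j _ => (hNj_int j).const_mul _),
      integral_const_mul, integral_finset_sum _ fun j _ => (hNj_int j).const_mul _]
    rw [← hP]
    congr 1
    rw [Finset.mul_sum]
    refine Finset.sum_congr rfl fun j _ => ?_
    rw [integral_const_mul, hNj_def]
    ring
  have hxij : ∀ j, xiFun β σ pfac t z j = P⁻¹ * Nj j := by
    intro j
    rw [hxi]
    simp only [Pi.smul_apply, smul_eq_mul]
    rw [hMj j]
  -- RHS coordinate
  have hRHS : (af t • (((Lam σ t)⁻¹ * β) *ᵥ xiFun β σ pfac t z) - (Lam σ t)⁻¹ *ᵥ r) i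
      = af t * ((w i)⁻¹ * ∑ j, β i j * (P⁻¹ * Nj j)) - (w i)⁻¹ * r i := by
    rw [Pi.sub_apply, Pi.smul_apply, smul_eq_mul]
    congr 1
    · congr 1
      rw [hLamInv, ← Matrix.mulVec_mulVec, hW_def]
      rw [Matrix.mulVec_diagonal]
      congr 1
      have : (β *ᵥ xiFun β σ pfac t z) i = ∑ j, β i j * xiFun β σ pfac t z j := by
        simp [Matrix.mulVec, dotProduct]
      rw [this]
      exact Finset.sum_congr rfl fun j _ => by rw [hxij j]
    · rw [hLamInv, hW_def, Matrix.mulVec_diagonal]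
  rw [hgrad, happly, hIi, hRHS]
  have hsum_pull : ∑ j, β i j * (P⁻¹ * Nj j) = P⁻¹ * ∑ j, β i j * Nj j := by
    rw [Finset.mul_sum]
    exact Finset.sum_congr rfl fun j _ => by ring
  rw [hsum_pull]
  have hPinv : P⁻¹ * P = 1 := inv_mul_cancel₀ hP_pos.ne'
  linear_combination (-((w i)⁻¹ * r i)) * hPinv
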